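/- The sequents ▲p ⊢ ■p ∨ ■¬p and ■p ∨ ■¬p ⊢ ▲p are valid on every frame, where ▲φ is true at w iff any two R-successors of w agree on both the truth and the falsity of φ and every R-successor makes φ true or false; ▲φ is false at w iff two successors disagree on truth of φ, or disagree on falsity of φ, or one successor makes φ true while another makes it false. -/
import Mathlib


/-- Formulas of the language with ¬, ∧, ∨, □, ■, 𝐈 and ▲. -/
inductive Form : Type
  | var : ℕ → Form
  | neg : Form → Form
  | conj : Form → Form → Form
  | disj : Form → Form → Form
  | box : Form → Form
  | bbox : Form → Form
  | ign : Form → Form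
  | tri : Form → Form

/-- A Kripke model for Belnap–Dunn modal logic. -/
structure Model (W : Type) where
  R : W → W → Prop
  vp : ℕ → W → Prop
  vn : ℕ → W → Prop

mutual
  /-- support of truth -/
  def tr {W : Type} (M : Model W) : Form → W → Prop
    | .var n, w => M.vp n w
    | .neg φ, w => fa M φ w
    | .conj φ ψ, w => tr M φ w ∧ tr M ψ w
    | .disj φ ψ, w => tr M φ w ∨ tr M ψ w
    | .box φ, w => ∀ w', M.R w w' → tr M φ w'
    | .bbox φ, w => (∀ w', M.R w w' → tr M φ w') ∧
        ∀ w₁ w₂, M.R w w₁ → M.R w w₂ → fa M φ w₁ → fa M φ w₂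
    | .ign φ, w => tr M φ w ∧ (∀ w', M.R w w' → w' ≠ w → fa M φ w') ∧
        ∀ w₁ w₂, M.R w w₁ → w₁ ≠ w → M.R w w₂ → w₂ ≠ w → tr M φ w₁ → tr M φ w₂
    | .tri φ, w => (∀ w₁ w₂, M.R w w₁ → M.R w w₂ →
          (tr M φ w₁ → tr M φ w₂) ∧ (fa M φ w₁ → fa M φ w₂)) ∧
        ∀ w', M.R w w' → tr M φ w' ∨ fa M φ w'
  /-- support of falsity -/
  def fa {W : Type} (M : Model W) : Form → W → Prop
    | .var n, w => M.vn n w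
    | .neg φ, w => tr M φ w
    | .conj φ ψ, w => fa M φ w ∨ fa M ψ w
    | .disj φ ψ, w => fa M φ w ∧ fa M ψ w
    | .box φ, w => ∃ w', M.R w w' ∧ fa M φ w'
    | .bbox φ, w => (∃ w', M.R w w' ∧ fa M φ w') ∨
        ∃ w₁ w₂, M.R w w₁ ∧ M.R w w₂ ∧ tr M φ w₁ ∧ ¬ tr M φ w₂
    | .ign φ, w => fa M φ w ∨ (∃ w', M.R w w' ∧ w' ≠ w ∧ tr M φ w') ∨
        ∃ w₁ w₂, (M.R w w₁ ∧ w₁ ≠ w) ∧ (M.R w w₂ ∧ w₂ ≠ w) ∧ ¬ fa M φ w₁ ∧ fa M φ w₂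
    | .tri φ, w => (∃ w₁ w₂, M.R w w₁ ∧ M.R w w₂ ∧ tr M φ w₁ ∧ ¬ tr M φ w₂) ∨
        (∃ w₁ w₂, M.R w w₁ ∧ M.R w w₂ ∧ fa M φ w₁ ∧ ¬ fa M φ w₂) ∨
        (∃ w₁ w₂, M.R w w₁ ∧ M.R w w₂ ∧ tr M φ w₁ ∧ fa M φ w₂)
end

/-- φ contains an occurrence of □ -/
def hasBox : Form → Prop
  | .var _ => False
  | .neg φ => hasBox φ
  | .conj φ ψ => hasBox φ ∨ hasBox ψ
  | .disj φ ψ => hasBox φ ∨ hasBox ψ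
  | .box _ => True
  | .bbox φ => hasBox φ
  | .ign φ => hasBox φ
  | .tri φ => hasBox φ

/-- φ contains an occurrence of ■ -/
def hasBBox : Form → Prop
  | .var _ => False
  | .neg φ => hasBBox φ
  | .conj φ ψ => hasBBox φ ∨ hasBBox ψ
  | .disj φ ψ => hasBBox φ ∨ hasBBox ψ
  | .box φ => hasBBox φ
  | .bbox _ => True
  | .ign φ => hasBBox φ
  | .tri φ => hasBBox φ

/-- φ contains an occurrence of 𝐈 -/
def hasIgn : Form → Prop
  | .var _ => False
  | .neg φ => hasIgn φ
  | .conj φ ψ => hasIgn φ ∨ hasIgn ψ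
  | .disj φ ψ => hasIgn φ ∨ hasIgn ψ
  | .box φ => hasIgn φ
  | .bbox φ => hasIgn φ
  | .ign _ => True
  | .tri φ => hasIgn φ

/-- φ contains an occurrence of ▲ -/
def hasTri : Form → Prop
  | .var _ => False
  | .neg φ => hasTri φ
  | .conj φ ψ => hasTri φ ∨ hasTri ψ
  | .disj φ ψ => hasTri φ ∨ hasTri ψ
  | .box φ => hasTri φ
  | .bbox φ => hasTri φ
  | .ign φ => hasTri φ
  | .tri _ => True

/-- validity of the sequent φ ⊢ χ on the frame (W,R) -/
def validOn {W : Type} (R : W → W → Prop) (φ χ : Form) : Prop :=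
  ∀ (vp vn : ℕ → W → Prop) (w : W), tr ⟨R, vp, vn⟩ φ w → tr ⟨R, vp, vn⟩ χ w

/-- ♦φ := ¬■¬φ -/
def dia (φ : Form) : Form := .neg (.bbox (.neg φ))

/-- ▲p ⊣⊢ ■p ∨ ■¬p is valid on every frame. -/
theorem tri_iff_bbox_or_bbox_neg {W : Type} [Nonempty W] (R : W → W → Prop) :
    validOn R (.tri (.var 0)) (.disj (.bbox (.var 0)) (.bbox (.neg (.var 0)))) ∧
    validOn R (.disj (.bbox (.var 0)) (.bbox (.neg (.var 0)))) (.tri (.var 0)) := by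
  constructor
  · intro vp vn w h
    simp only [tr, fa] at h ⊢
    obtain ⟨hagree, htot⟩ := h
    by_cases hall : ∀ w', R w w' → tr ⟨R, vp, vn⟩ (.var 0) w'
    · exact Or.inl ⟨hall, fun w₁ w₂ h1 h2 hf => (hagree w₁ w₂ h1 h2).2 hf⟩
    · push_neg at hall
      obtain ⟨w₀, hR0, hnt0⟩ := hall
      have hf0 : fa ⟨R, vp, vn⟩ (.var 0) w₀ := (htot w₀ hR0).resolve_left hnt0
      refine Or.inr ⟨fun w' hR' => (hagree w₀ w' hR0 hR').2 hf0,
        fun w₁ w₂ h1 h2 ht1 => (hagree w₁ w₂ h1 h2).1 ht1⟩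
  · intro vp vn w h
    simp only [tr, fa] at h ⊢
    rcases h with ⟨hall, hfagree⟩ | ⟨hfall, htagree⟩
    · exact ⟨fun w₁ w₂ h1 h2 => ⟨fun _ => hall w₂ h2, fun hf => hfagree w₁ w₂ h1 h2 hf⟩,
        fun w' hR' => Or.inl (hall w' hR')⟩
    · exact ⟨fun w₁ w₂ h1 h2 => ⟨fun ht => htagree w₁ w₂ h1 h2 ht, fun _ => hfall w₂ h2⟩,
        fun w' hR' => Or.inr (hfall w' hR')⟩
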